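/- Suppose the finite group G acts on the finite set Ω, (G, Ω) satisfies Hypothesis (3fix), and |Ω| ≥ 7. Let ω ∈ Ω, suppose |G_ω| is odd, and suppose there exist three distinct points of Ω, one of which is ω, whose pointwise stabilizer H in G is nontrivial and is a Frobenius complement in G_ω (i.e. H is a proper subgroup of G_ω with H ∩ xHx⁻¹ = 1 for all x ∈ G_ω \ H). Let Λ be the coset space G/H with the natural G-action by multiplication. Then (G, Λ) satisfies Hypothesis (3fix), and moreover every nontrivial element of G that fixes at least one point of Λ fixes exactly three points of Λ. -/

import Mathlib

open Pointwise

/-- Hypothesis (3fix): the action of `G` on `Ω` is faithful and transitive, every element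
of `G` fixing at least four distinct points of `Ω` is the identity, and some nontrivial
element of `G` fixes at least three distinct points of `Ω`. -/
def Hyp3fix (G : Type*) [Group G] (Ω : Type*) [MulAction G Ω] : Prop :=
  MulAction.IsPretransitive G Ω ∧
  (∀ g : G, (∀ ω : Ω, g • ω = ω) → g = 1) ∧
  (∀ g : G, ∀ a b c d : Ω, a ≠ b → a ≠ c → a ≠ d → b ≠ c → b ≠ d → c ≠ d →
      g • a = a → g • b = b → g • c = c → g • d = d → g = 1) ∧
  (∃ g : G, g ≠ 1 ∧ ∃ a b c : Ω, a ≠ b ∧ a ≠ c ∧ b ≠ c ∧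
      g • a = a ∧ g • b = b ∧ g • c = c)

/-- If `s` fixes `p`, swaps `q` and `r`, and `s ^ 2` has odd order, then the stabilizer
of `p` has even order; so if it is odd we get a contradiction. -/
lemma no_swap_aux {G : Type*} [Group G] [Finite G] {Ω : Type*} [MulAction G Ω]
    {p q r : Ω} {s : G} (hstab : Odd (Nat.card (MulAction.stabilizer G p)))
    (hso : Odd (orderOf (s ^ 2)))
    (hq : q ≠ r) (hp : s • p = p) (hqr : s • q = r) (hrq : s • r = q) : False := by
  obtain ⟨j, hj⟩ := hso
  have h2 : ∀ n : ℕ, (s ^ 2) ^ n • q = q ∧ (s ^ 2) ^ n • r = r := by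
    intro n
    induction n with
    | zero => simp
    | succ n ih =>
      have hpow : (s ^ 2) ^ (n + 1) = (s ^ 2) ^ n * s ^ 2 := pow_succ _ _
      have hs2q : (s ^ 2) • q = q := by rw [pow_two, mul_smul, hqr, hrq]
      have hs2r : (s ^ 2) • r = r := by rw [pow_two, mul_smul, hrq, hqr]
      constructor
      · rw [hpow, mul_smul, hs2q, ih.1]
      · rw [hpow, mul_smul, hs2r, ih.2]
  set d := orderOf (s ^ 2) with hd
  have hd1 : (s ^ 2) ^ d = 1 := pow_orderOf_eq_one _
  set u := s ^ d with hu
  have hu2 : u ^ 2 = 1 := by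
    rw [hu, ← pow_mul, mul_comm d 2, pow_mul]; exact hd1
  have huq : u • q = r := by
    have hsplit : s ^ d = (s ^ 2) ^ j * s := by
      rw [← pow_mul, ← pow_succ, hj]
    rw [hu, hsplit, mul_smul, hqr, (h2 j).2]
  have hune : u ≠ 1 := by
    intro h
    rw [h, one_smul] at huq
    exact hq huq
  have hup : u ∈ MulAction.stabilizer G p := by
    have : s ∈ MulAction.stabilizer G p := MulAction.mem_stabilizer_iff.mpr hp
    exact pow_mem this d
  have hou : orderOf u = 2 := orderOf_eq_prime hu2 hune
  have : orderOf (⟨u, hup⟩ : MulAction.stabilizer G p) = 2 := by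
    rw [Subgroup.orderOf_mk]; exact hou
  have hdvd : 2 ∣ Nat.card (MulAction.stabilizer G p) := by
    rw [← this]; exact orderOf_dvd_natCard _
  rw [Nat.odd_iff] at hstab
  omega

set_option maxHeartbeats 1600000 in
/-- Suppose `(G, Ω)` satisfies Hypothesis (3fix) and `|Ω| ≥ 7`. Let `ω ∈ Ω` with
`|G_ω|` odd, and suppose `H`, the pointwise stabilizer of three distinct points one of
which is `ω`, is nontrivial and is a Frobenius complement in `G_ω`. Then, for the coset
space `Λ = G/H` with the natural `G`-action, `(G, Λ)` satisfies Hypothesis (3fix) and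
every nontrivial element of `G` fixing at least one point of `Λ` fixes exactly three
points of `Λ`. -/
theorem hyp3fix_coset_space_of_frobenius_stabilizer (G : Type*) [Group G] [Finite G]
    (Ω : Type*) [Finite Ω] [MulAction G Ω] (h : Hyp3fix G Ω)
    (hΩ : 7 ≤ Nat.card Ω) (ω b c : Ω) (hb : ω ≠ b) (hc : ω ≠ c) (hbc : b ≠ c)
    (hodd : Odd (Nat.card (MulAction.stabilizer G ω)))
    (H : Subgroup G)
    (hH : H = MulAction.stabilizer G ω ⊓ MulAction.stabilizer G b ⊓
        MulAction.stabilizer G c)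
    (hHne : H ≠ ⊥) (hHlt : H < MulAction.stabilizer G ω)
    (hfrob : ∀ x ∈ MulAction.stabilizer G ω, x ∉ H →
        H ⊓ H.map (MulAut.conj x).toMonoidHom = ⊥) :
    Hyp3fix G (G ⧸ H) ∧
    ∀ g : G, g ≠ 1 → (∃ x : G ⧸ H, g • x = x) →
      Nat.card {x : G ⧸ H | g • x = x} = 3 := by
  obtain ⟨htrans, hfaith, h4, -⟩ := h
  -- Notation
  set K := MulAction.stabilizer G ω with hK
  set T : Set Ω := {ω, b, c} with hTdef
  have hmemT : ∀ p : Ω, p ∈ T ↔ p = ω ∨ p = b ∨ p = c := by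
    intro p; simp [hTdef]
  have hTfin : T.Finite := Set.toFinite _
  have hT3 : T.ncard = 3 := by
    rw [hTdef]
    rw [Set.ncard_insert_of_notMem (by simp [hb, hc]) (Set.toFinite _), Set.ncard_pair hbc]
  -- membership in H
  have hmemH : ∀ g : G, g ∈ H ↔ g • ω = ω ∧ g • b = b ∧ g • c = c := by
    intro g
    rw [hH]
    simp only [Subgroup.mem_inf, MulAction.mem_stabilizer_iff]
    tauto
  have hfixT : ∀ h' ∈ H, ∀ p ∈ T, h' • p = p := by
    intro h' hh' p hp
    rw [hmemH] at hh'
    rcases (hmemT p).mp hp with rfl | rfl | rfl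
    · exact hh'.1
    · exact hh'.2.1
    · exact hh'.2.2
  -- nontrivial elements of H fix exactly T
  have hfix : ∀ h' : G, h' ∈ H → h' ≠ 1 → ∀ p : Ω, h' • p = p ↔ p ∈ T := by
    intro h' hh' h1 p
    constructor
    · intro hp
      by_contra hpT
      rw [hmemT] at hpT
      push_neg at hpT
      obtain ⟨hp1, hp2, hp3⟩ := hpT
      rw [hmemH] at hh'
      exact h1 (h4 h' ω b c p hb hc (Ne.symm hp1) hbc (Ne.symm hp2) (Ne.symm hp3)
        hh'.1 hh'.2.1 hh'.2.2 hp)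
    · exact hfixT h' hh' p
  -- the setwise stabilizer S
  set S := MulAction.stabilizer G T with hSdef
  have hmemS : ∀ g : G, g ∈ S ↔ g • T = T := fun g => MulAction.mem_stabilizer_iff
  have hSsub : ∀ g : G, (∀ p ∈ T, g • p ∈ T) → g ∈ S := by
    intro g hg
    rw [hmemS]
    have hsub : g • T ⊆ T := by
      intro x hx
      rw [Set.mem_smul_set_iff_inv_smul_mem] at hx
      have := hg _ hx
      rwa [smul_inv_smul] at this
    refine Set.eq_of_subset_of_ncard_le hsub ?_ hTfin
    have himg : g • T = (fun p => g • p) '' T := rfl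
    rw [himg, Set.ncard_image_of_injective T (MulAction.injective g)]
  have hSmemT : ∀ s ∈ S, ∀ p ∈ T, s • p ∈ T := by
    intro s hs p hp
    rw [hmemS] at hs
    rw [← hs]
    exact Set.smul_mem_smul_set hp
  -- S normalizes H
  have hconjmem : ∀ s ∈ S, ∀ h' ∈ H, s * h' * s⁻¹ ∈ H := by
    intro s hs h' hh'
    have hsinv : s⁻¹ ∈ S := inv_mem hs
    rw [hmemH]
    refine ⟨?_, ?_, ?_⟩ <;>
    · rw [mul_smul, mul_smul]
      rw [hfixT h' hh' _ (hSmemT s⁻¹ hsinv _ (by rw [hmemT]; tauto)), smul_inv_smul]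
  have hHS : H ≤ S := by
    intro h' hh'
    exact hSsub h' (fun p hp => by rw [hfixT h' hh' p hp]; exact hp)
  -- the key rigidity lemma
  have keyS : ∀ x y hx hy : G, hx ∈ H → hx ≠ 1 → hy ∈ H →
      x * hx * x⁻¹ = y * hy * y⁻¹ → y⁻¹ * x ∈ S := by
    intro x y hx hy hxH hx1 hyH heq
    refine hSsub _ (fun p hp => ?_)
    have h1 : (x * hx * x⁻¹) • (x • p) = x • p := by
      rw [mul_assoc, mul_smul, mul_smul, inv_smul_smul, hfixT hx hxH p hp]
    rw [heq, mul_assoc, mul_smul, mul_smul] at h1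
    have h2 : hy • (y⁻¹ • (x • p)) = y⁻¹ • (x • p) := by
      have := congrArg (fun z => y⁻¹ • z) h1
      simpa using this
    have hy1 : hy ≠ 1 := by
      intro hh
      subst hh
      apply hx1
      have h0 : x * hx * x⁻¹ = 1 := by rw [heq]; group
      calc hx = x⁻¹ * (x * hx * x⁻¹) * x := by group
      _ = 1 := by rw [h0]; group
    rw [hfix hy hyH hy1] at h2
    rwa [← mul_smul] at h2
  -- stabilizers of all points have the same odd cardinality
  haveI := htrans
  have hstabcard : ∀ p : Ω, Nat.card (MulAction.stabilizer G p) = Nat.card K := by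
    intro p
    obtain ⟨g, hg⟩ := MulAction.exists_smul_eq G ω p
    rw [← hg, MulAction.stabilizer_smul_eq_stabilizer_map_conj]
    exact (Nat.card_congr (Subgroup.equivMapOfInjective K _
      (MulAut.conj g).injective).toEquiv).symm
  have hoddp : ∀ p : Ω, Odd (Nat.card (MulAction.stabilizer G p)) := by
    intro p; rw [hstabcard]; exact hodd
  have hodddvd : ∀ m n : ℕ, m ∣ n → Odd n → Odd m := by
    intro m n hmn hn
    rcases Nat.even_or_odd m with he | ho
    · exfalso
      have h2n : 2 ∣ n := dvd_trans he.two_dvd hmn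
      rw [Nat.odd_iff] at hn
      omega
    · exact ho
  have hHodd : Odd (Nat.card H) := by
    refine hodddvd _ _ ?_ hodd
    have hle : H ≤ K := hHlt.le
    have := Subgroup.card_eq_card_quotient_mul_card_subgroup (H.subgroupOf K)
    have hcc : Nat.card (H.subgroupOf K) = Nat.card H :=
      Nat.card_congr (Subgroup.subgroupOfEquivOfLe hle).toEquiv
    exact ⟨Nat.card (K ⧸ H.subgroupOf K), by rw [this, hcc, mul_comm]⟩
  have hH1 : Nat.card H ≠ 1 := fun h1 => hHne (Subgroup.card_eq_one.mp h1)
  have hH3 : 3 ≤ Nat.card H := by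
    rw [Nat.odd_iff] at hHodd
    omega
  have hordodd : ∀ g : G, g ∈ H → Odd (orderOf g) := by
    intro g hg
    refine hodddvd _ _ ?_ hHodd
    have : orderOf (⟨g, hg⟩ : H) ∣ Nat.card H := orderOf_dvd_natCard _
    rwa [Subgroup.orderOf_mk] at this
  have hordS2 : ∀ s : G, s * s ∈ H → Odd (orderOf (s ^ 2)) := by
    intro s hs
    exact hordodd (s ^ 2) (by rw [sq]; exact hs)
  have hmeT : ∀ p : Ω, p = ω ∨ p = b ∨ p = c → p ∈ T := fun p hp => (hmemT p).mpr hp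
  -- elements of S fixing a point of T lie in H
  have hcaseA : ∀ s ∈ S, s • ω = ω → s ∈ H := by
    intro s hs hsω
    have hsb := (hmemT _).mp (hSmemT s hs b (hmeT b (by tauto)))
    have hsc := (hmemT _).mp (hSmemT s hs c (hmeT c (by tauto)))
    rcases hsb with h1 | h1 | h1
    · exact absurd (MulAction.injective s (h1.trans hsω.symm)) (Ne.symm hb)
    · rcases hsc with h2 | h2 | h2
      · exact absurd (MulAction.injective s (h2.trans hsω.symm)) (Ne.symm hc)
      · exact absurd (MulAction.injective s (h2.trans h1.symm)) (Ne.symm hbc)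
      · exact (hmemH s).mpr ⟨hsω, h1, h2⟩
    · rcases hsc with h2 | h2 | h2
      · exact absurd (MulAction.injective s (h2.trans hsω.symm)) (Ne.symm hc)
      · -- s • b = c, s • c = b : swap
        exfalso
        have hs2 : s * s ∈ H := (hmemH _).mpr ⟨by rw [mul_smul, hsω, hsω],
          by rw [mul_smul, h1, h2], by rw [mul_smul, h2, h1]⟩
        exact no_swap_aux (hoddp ω) (hordS2 s hs2) hbc hsω h1 h2
      · exact absurd (MulAction.injective s (h1.trans h2.symm)) hbc
  have hStriv : ∀ s ∈ S, ∀ p ∈ T, s • p = p → s ∈ H := by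
    intro s hs p hp hsp
    rcases (hmemT p).mp hp with rfl | rfl | rfl
    · exact hcaseA s hs hsp
    · -- s • b = b
      rcases (hmemT _).mp (hSmemT s hs ω (hmeT ω (by tauto))) with h1 | h1 | h1
      · exact hcaseA s hs h1
      · exact absurd (MulAction.injective s (h1.trans hsp.symm)) hb
      · -- s • ω = c
        rcases (hmemT _).mp (hSmemT s hs c (hmeT c (by tauto))) with h2 | h2 | h2
        · -- s • c = ω : swap of ω and c fixing b
          exfalso
          have hs2 : s * s ∈ H := (hmemH _).mpr ⟨by rw [mul_smul, h1, h2],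
            by rw [mul_smul, hsp, hsp], by rw [mul_smul, h2, h1]⟩
          exact no_swap_aux (hoddp _) (hordS2 s hs2) hc hsp h1 h2
        · exact absurd (MulAction.injective s (hsp.trans h2.symm)) hbc
        · exact absurd (MulAction.injective s (h1.trans h2.symm)) hc
    · -- s • c = c
      rcases (hmemT _).mp (hSmemT s hs ω (hmeT ω (by tauto))) with h1 | h1 | h1
      · exact hcaseA s hs h1
      · -- s • ω = b
        rcases (hmemT _).mp (hSmemT s hs b (hmeT b (by tauto))) with h2 | h2 | h2
        · -- s • b = ω : swap of ω and b fixing c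
          exfalso
          have hs2 : s * s ∈ H := (hmemH _).mpr ⟨by rw [mul_smul, h1, h2],
            by rw [mul_smul, h2, h1], by rw [mul_smul, hsp, hsp]⟩
          exact no_swap_aux (hoddp _) (hordS2 s hs2) hb hsp h1 h2
        · exact absurd (MulAction.injective s (h1.trans h2.symm)) hb
        · exact absurd (MulAction.injective s (h2.trans hsp.symm)) hbc
      · exact absurd (MulAction.injective s (h1.trans hsp.symm)) hc
  have hcosS : ∀ s t : G, s ∈ S → t ∈ S → s • ω = t • ω → t⁻¹ * s ∈ H := by
    intro s t hs ht hst
    refine hStriv _ (mul_mem (inv_mem ht) hs) ω (by rw [hmemT]; tauto) ?_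
    rw [mul_smul, hst, inv_smul_smul]
  -- counting: the set D of elements x with x⁻¹ • ω ∈ T
  set D : Set G := {x : G | x⁻¹ • ω ∈ T} with hDdef
  have hfibcard : ∀ p : Ω, {x : G | ω = x • p}.ncard = Nat.card K := by
    intro p
    obtain ⟨t, ht⟩ := MulAction.exists_smul_eq G p ω
    have himg : {x : G | ω = x • p} = (fun y : G => t * y) '' (MulAction.stabilizer G p : Set G) := by
      ext x
      simp only [Set.mem_setOf_eq, Set.mem_image, SetLike.mem_coe, MulAction.mem_stabilizer_iff]
      constructor
      · intro hx
        refine ⟨t⁻¹ * x, ?_, by group⟩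
        rw [mul_smul, inv_smul_eq_iff, ← hx, ht]
      · rintro ⟨y, hy, rfl⟩
        rw [mul_smul, hy, ht]
    rw [himg, Set.ncard_image_of_injective _ (mul_right_injective t)]
    rw [← Nat.card_coe_set_eq]
    rw [SetLike.coe_sort_coe]
    exact hstabcard p
  have hDun : D = {x : G | ω = x • ω} ∪ ({x : G | ω = x • b} ∪ {x : G | ω = x • c}) := by
    ext x
    simp only [hDdef, Set.mem_setOf_eq, Set.mem_union, hmemT, inv_smul_eq_iff]
  have hDcard : D.ncard = 3 * Nat.card K := by
    have hdisj1 : Disjoint {x : G | ω = x • ω} ({x : G | ω = x • b} ∪ {x : G | ω = x • c}) := by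
      rw [Set.disjoint_left]
      rintro x hx (hx' | hx') <;>
        [exact hb (MulAction.injective x (hx.symm.trans hx'));
         exact hc (MulAction.injective x (hx.symm.trans hx'))]
    have hdisj2 : Disjoint {x : G | ω = x • b} {x : G | ω = x • c} := by
      rw [Set.disjoint_left]
      intro x hx hx'
      exact hbc (MulAction.injective x (hx.symm.trans hx'))
    rw [hDun, Set.ncard_union_eq hdisj1 (Set.toFinite _) (Set.toFinite _),
      Set.ncard_union_eq hdisj2 (Set.toFinite _) (Set.toFinite _),
      hfibcard ω, hfibcard b, hfibcard c]
    ring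
  -- the set X and the conjugation map
  set X : Set (G × G) := D ×ˢ ((H : Set G) \ {1}) with hXdef
  have hXmem : ∀ q : G × G, q ∈ X ↔ q.1⁻¹ • ω ∈ T ∧ q.2 ∈ H ∧ q.2 ≠ 1 := by
    intro q
    rw [hXdef, Set.mem_prod]
    simp only [Set.mem_diff, Set.mem_singleton_iff, SetLike.mem_coe, hDdef, Set.mem_setOf_eq]
  have hXcard : X.ncard = 3 * Nat.card K * (Nat.card H - 1) := by
    have h1 : X.ncard = D.ncard * ((H : Set G) \ {1}).ncard := by
      rw [← Nat.card_coe_set_eq, ← Nat.card_coe_set_eq, ← Nat.card_coe_set_eq,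
        hXdef, Nat.card_congr (Equiv.Set.prod D ((H : Set G) \ {1})), Nat.card_prod]
    have hsetH : (H : Set G).ncard = Nat.card H := by
      rw [← Nat.card_coe_set_eq, SetLike.coe_sort_coe]
    rw [h1, hDcard]
    congr 1
    rw [Set.ncard_diff_singleton_of_mem (by exact H.one_mem), hsetH]
  set f : G × G → G := fun q => q.1 * q.2 * q.1⁻¹ with hfdef
  set I : Set G := f '' X with hIdef
  have hconjne : ∀ x h' : G, h' ≠ 1 → x * h' * x⁻¹ ≠ 1 := by
    intro x h' h1 hc0
    apply h1
    calc h' = x⁻¹ * (x * h' * x⁻¹) * x := by group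
    _ = 1 := by rw [hc0]; group
  have hIsub : I ⊆ (K : Set G) \ {1} := by
    rintro k ⟨⟨x, h'⟩, hqX, rfl⟩
    obtain ⟨hxD, hh', h1⟩ := (hXmem _).mp hqX
    refine ⟨?_, hconjne x h' h1⟩
    simp only [SetLike.mem_coe, hK, MulAction.mem_stabilizer_iff]
    show (x * h' * x⁻¹) • ω = ω
    rw [mul_assoc, mul_smul, mul_smul, (hfix h' hh' h1 _).mpr hxD, smul_inv_smul]
  have hIcard : X.ncard = I.ncard * Nat.card S := by
    have hex : ∀ k : ↥I, ∃ q : G × G, q ∈ X ∧ f q = (k : G) := by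
      intro k
      obtain ⟨q, hq, hfq⟩ := k.2
      exact ⟨q, hq, hfq⟩
    choose xk hxkX hxkf using hex
    have hmemXinv : ∀ (k : ↥I) (s : ↥S),
        ((xk k).1 * (s : G), (s : G)⁻¹ * (xk k).2 * (s : G)) ∈ X := by
      intro k s
      obtain ⟨hD1, hH2, hne2⟩ := (hXmem (xk k)).mp (hxkX k)
      refine (hXmem _).mpr ⟨?_, ?_, ?_⟩
      · show ((xk k).1 * (s : G))⁻¹ • ω ∈ T
        rw [mul_inv_rev, mul_smul]
        exact hSmemT (s : G)⁻¹ (inv_mem s.2) _ hD1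
      · have := hconjmem (s : G)⁻¹ (inv_mem s.2) (xk k).2 hH2
        rwa [inv_inv] at this
      · intro h0
        apply hne2
        have h0' : (s : G)⁻¹ * (xk k).2 * (s : G) = 1 := h0
        calc (xk k).2 = (s : G) * ((s : G)⁻¹ * (xk k).2 * (s : G)) * (s : G)⁻¹ := by group
        _ = 1 := by rw [h0']; group
    have hfqk : ∀ (k : ↥I) (s : ↥S),
        f ((xk k).1 * (s : G), (s : G)⁻¹ * (xk k).2 * (s : G)) = (k : G) := by
      intro k s
      show ((xk k).1 * (s : G)) * ((s : G)⁻¹ * (xk k).2 * (s : G)) * ((xk k).1 * (s : G))⁻¹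
        = (k : G)
      rw [← hxkf k]
      show _ = (xk k).1 * (xk k).2 * (xk k).1⁻¹
      group
    set kq : ↥X → ↥I := fun q => ⟨f q.1, Set.mem_image_of_mem f q.2⟩ with hkq
    have hSmem2 : ∀ q : ↥X, (xk (kq q)).1⁻¹ * q.1.1 ∈ S := by
      intro q
      obtain ⟨hD1, hH1', hne1⟩ := (hXmem q.1).mp q.2
      obtain ⟨hD2, hH2, hne2⟩ := (hXmem (xk (kq q))).mp (hxkX (kq q))
      refine keyS q.1.1 (xk (kq q)).1 q.1.2 (xk (kq q)).2 hH1' hne1 hH2 ?_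
      have h1 := hxkf (kq q)
      show q.1.1 * q.1.2 * q.1.1⁻¹ = _
      rw [show (xk (kq q)).1 * (xk (kq q)).2 * (xk (kq q)).1⁻¹ = f (xk (kq q)) from rfl, h1]
    let Φ : ↥X → ↥I × ↥S := fun q => (kq q, ⟨(xk (kq q)).1⁻¹ * q.1.1, hSmem2 q⟩)
    have hbij : Function.Bijective Φ := by
      constructor
      · intro q q' hqq
        have h1 : kq q = kq q' := congrArg Prod.fst hqq
        have h2 : (xk (kq q)).1⁻¹ * q.1.1 = (xk (kq q')).1⁻¹ * q'.1.1 := by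
          have := congrArg Prod.snd hqq
          exact Subtype.ext_iff.mp this
        rw [h1] at h2
        have hx11 : q.1.1 = q'.1.1 := mul_left_cancel h2
        have hf12 : f q.1 = f q'.1 := Subtype.ext_iff.mp h1
        have hx12 : q.1.2 = q'.1.2 := by
          have : q.1.1 * q.1.2 * q.1.1⁻¹ = q'.1.1 * q'.1.2 * q'.1.1⁻¹ := hf12
          rw [← hx11] at this
          have h3 : q.1.1 * q.1.2 = q.1.1 * q'.1.2 := mul_right_cancel this
          exact mul_left_cancel h3
        exact Subtype.ext (Prod.ext hx11 hx12)
      · rintro ⟨k, s⟩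
        refine ⟨⟨((xk k).1 * (s : G), (s : G)⁻¹ * (xk k).2 * (s : G)), hmemXinv k s⟩, ?_⟩
        have hkk : kq ⟨((xk k).1 * (s : G), (s : G)⁻¹ * (xk k).2 * (s : G)), hmemXinv k s⟩
            = k := Subtype.ext (hfqk k s)
        refine Prod.ext hkk (Subtype.ext ?_)
        show (xk (kq _)).1⁻¹ * ((xk k).1 * (s : G)) = (s : G)
        rw [hkk]
        group
    have hcard := Nat.card_congr (Equiv.ofBijective Φ hbij)
    rw [Nat.card_prod] at hcard
    rw [← Nat.card_coe_set_eq, hcard, Nat.card_coe_set_eq]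
  -- the index inequality
  have hKpos : 0 < Nat.card K := Nat.card_pos
  have hineq : 3 * Nat.card K * (Nat.card H - 1) ≤ (Nat.card K - 1) * Nat.card S := by
    rw [← hXcard, hIcard]
    have hle : I.ncard ≤ Nat.card K - 1 := by
      have hsetK : (K : Set G).ncard = Nat.card K := by
        rw [← Nat.card_coe_set_eq, SetLike.coe_sort_coe]
      have h1 := Set.ncard_le_ncard hIsub (Set.toFinite _)
      rwa [Set.ncard_diff_singleton_of_mem (by exact K.one_mem),
        hsetK] at h1
    exact Nat.mul_le_mul_right _ hle
  have hScard2 : 2 * Nat.card H < Nat.card S := by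
    by_contra hle
    push_neg at hle
    obtain ⟨m', hm'⟩ : ∃ m', Nat.card H = m' + 3 := ⟨Nat.card H - 3, by omega⟩
    obtain ⟨a', ha'⟩ : ∃ a', Nat.card K = a' + 1 := ⟨Nat.card K - 1, by omega⟩
    rw [hm', ha'] at hineq
    have h1 : m' + 3 - 1 = m' + 2 := by omega
    have h2 : a' + 1 - 1 = a' := by omega
    rw [h1, h2] at hineq
    rw [hm'] at hle
    nlinarith
  -- the quotient S ⧸ H' has exactly 3 elements
  set H' : Subgroup ↥S := H.subgroupOf S with hH'def
  have hLag : Nat.card S = Nat.card (↥S ⧸ H') * Nat.card H := by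
    rw [Subgroup.card_eq_card_quotient_mul_card_subgroup H']
    congr 1
    exact Nat.card_congr (Subgroup.subgroupOfEquivOfLe hHS).toEquiv
  have hq3 : Nat.card (↥S ⧸ H') = 3 := by
    have hwd : ∀ s t : ↥S, QuotientGroup.leftRel H' s t →
        ((s : G) • ω : Ω) = (t : G) • ω := by
      intro s t hst
      rw [QuotientGroup.leftRel_apply, Subgroup.mem_subgroupOf] at hst
      have hst' : ((s : G)⁻¹ * (t : G)) ∈ H := by exact_mod_cast hst
      have hc0 : ((s : G)⁻¹ * (t : G)) • ω = ω := ((hmemH _).mp hst').1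
      rw [mul_smul] at hc0
      calc (s : G) • ω = (s : G) • ((s : G)⁻¹ • ((t : G) • ω)) := by rw [hc0]
      _ = (t : G) • ω := smul_inv_smul _ _
    set φ : ↥S ⧸ H' → Ω := fun q => Quotient.liftOn' q (fun s => (s : G) • ω) hwd with hφ
    have hφT : ∀ q, φ q ∈ T := by
      intro q
      induction q using Quotient.inductionOn' with
      | h s => exact hSmemT (s : G) s.2 ω (hmeT ω (by tauto))
    have hφinj : Function.Injective φ := by
      intro q q'
      induction q using Quotient.inductionOn' with
      | h s =>
        induction q' using Quotient.inductionOn' with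
        | h t =>
          intro hst
          apply Quotient.sound'
          rw [QuotientGroup.leftRel_apply, Subgroup.mem_subgroupOf]
          have hst2 : (s : G) • ω = (t : G) • ω := hst
          have := hcosS (t : G) (s : G) t.2 s.2 hst2.symm
          exact_mod_cast this
    have hle3 : Nat.card (↥S ⧸ H') ≤ 3 := by
      have hinj2 : Function.Injective (fun q => (⟨φ q, hφT q⟩ : ↥T)) :=
        fun q q' hqq => hφinj (congrArg Subtype.val hqq)
      have hcle := Nat.card_le_card_of_injective _ hinj2
      rwa [Nat.card_coe_set_eq, hT3] at hcle
    have hge3 : 3 ≤ Nat.card (↥S ⧸ H') := by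
      by_contra hlt
      push_neg at hlt
      have h2 : Nat.card (↥S ⧸ H') ≤ 2 := by omega
      have hq := Nat.mul_le_mul_right (Nat.card H) h2
      rw [← hLag] at hq
      omega
    omega
  -- fixed points on the quotient
  have hsmulmk : ∀ g y : G, g • (QuotientGroup.mk y : G ⧸ H) = QuotientGroup.mk (g * y) := by
    intro g y
    exact MulAction.Quotient.smul_mk H g y
  have hfixmk : ∀ g y : G,
      (g • (QuotientGroup.mk y : G ⧸ H) = QuotientGroup.mk y) ↔ y⁻¹ * g * y ∈ H := by
    intro g y
    rw [hsmulmk, QuotientGroup.eq]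
    rw [show (g * y)⁻¹ * y = (y⁻¹ * g * y)⁻¹ by group]
    exact inv_mem_iff
  have hfixcount : ∀ g y₀ : G, g ≠ 1 → y₀⁻¹ * g * y₀ ∈ H →
      Nat.card {x : G ⧸ H | g • x = x} = 3 := by
    intro g y₀ hg1 hkH
    obtain ⟨k, hkdef⟩ : ∃ k, k = y₀⁻¹ * g * y₀ := ⟨_, rfl⟩
    rw [← hkdef] at hkH
    have hk1 : k ≠ 1 := by
      intro h0
      apply hg1
      have hgy : g = y₀ * k * y₀⁻¹ := by rw [hkdef]; group
      rw [hgy, h0]; group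
    have hwd2 : ∀ s t : ↥S, QuotientGroup.leftRel H' s t →
        (QuotientGroup.mk (y₀ * (s : G)) : G ⧸ H) = QuotientGroup.mk (y₀ * (t : G)) := by
      intro s t hst
      rw [QuotientGroup.leftRel_apply, Subgroup.mem_subgroupOf] at hst
      rw [QuotientGroup.eq]
      rw [show (y₀ * (s : G))⁻¹ * (y₀ * (t : G)) = (s : G)⁻¹ * (t : G) by group]
      exact_mod_cast hst
    set F0 : ↥S ⧸ H' → G ⧸ H :=
      fun q => Quotient.liftOn' q (fun s => QuotientGroup.mk (y₀ * (s : G))) hwd2 with hF0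
    have hF0fix : ∀ q, F0 q ∈ {x : G ⧸ H | g • x = x} := by
      intro q
      induction q using Quotient.inductionOn' with
      | h s =>
        show g • (QuotientGroup.mk (y₀ * (s : G)) : G ⧸ H) = QuotientGroup.mk (y₀ * (s : G))
        rw [hfixmk]
        rw [show (y₀ * (s : G))⁻¹ * g * (y₀ * (s : G)) = (s : G)⁻¹ * k * (s : G) by
          rw [hkdef]; group]
        have := hconjmem (s : G)⁻¹ (inv_mem s.2) k hkH
        rwa [inv_inv] at this
    set F : ↥S ⧸ H' → {x : G ⧸ H | g • x = x} := fun q => ⟨F0 q, hF0fix q⟩ with hF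
    have hFbij : Function.Bijective F := by
      constructor
      · intro q q' hqq'
        have h0 : F0 q = F0 q' := congrArg Subtype.val hqq'
        revert h0
        induction q using Quotient.inductionOn' with
        | h s =>
          induction q' using Quotient.inductionOn' with
          | h t =>
            intro h0
            have h1 : (QuotientGroup.mk (y₀ * (s : G)) : G ⧸ H)
                = QuotientGroup.mk (y₀ * (t : G)) := h0
            rw [QuotientGroup.eq] at h1
            apply Quotient.sound'
            rw [QuotientGroup.leftRel_apply, Subgroup.mem_subgroupOf]
            rw [show (y₀ * (s : G))⁻¹ * (y₀ * (t : G)) = (s : G)⁻¹ * (t : G) by group] at h1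
            exact_mod_cast h1
      · rintro ⟨x, hx⟩
        obtain ⟨y, rfl⟩ := QuotientGroup.mk_surjective x
        rw [Set.mem_setOf_eq, hfixmk] at hx
        have hy1 : y⁻¹ * g * y ≠ 1 := by
          intro h0
          apply hg1
          have hgy : g = y * (y⁻¹ * g * y) * y⁻¹ := by group
          rw [hgy, h0]; group
        have hyS : y₀⁻¹ * y ∈ S := by
          refine keyS y y₀ (y⁻¹ * g * y) k hx hy1 hkH ?_
          rw [hkdef]; group
        refine ⟨QuotientGroup.mk ⟨y₀⁻¹ * y, hyS⟩, ?_⟩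
        apply Subtype.ext
        show QuotientGroup.mk (y₀ * (y₀⁻¹ * y)) = QuotientGroup.mk y
        congr 1
        group
    have hcong := Nat.card_congr (Equiv.ofBijective F hFbij)
    rw [← hcong, hq3]
  -- final assembly
  refine ⟨⟨inferInstance, ?_, ?_, ?_⟩, ?_⟩
  · -- faithfulness
    intro g hg
    apply hfaith
    intro p
    obtain ⟨y, hy⟩ := MulAction.exists_smul_eq G ω p
    have h0 := (hfixmk g y).mp (hg (QuotientGroup.mk y))
    have h1 : (y⁻¹ * g * y) • ω = ω := ((hmemH _).mp h0).1
    rw [mul_smul, mul_smul] at h1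
    rw [← hy]
    calc g • y • ω = y • ((y⁻¹ : G) • (g • (y • ω))) := (smul_inv_smul _ _).symm
    _ = y • ω := by rw [h1]
  · -- four-point condition
    intro g a1 a2 a3 a4 h12 h13 h14 h23 h24 h34 hf1 hf2 hf3 hf4
    by_contra hg1
    obtain ⟨y1, rfl⟩ := QuotientGroup.mk_surjective a1
    have hmem := (hfixmk g y1).mp hf1
    have h3 := hfixcount g y1 hg1 hmem
    rw [Nat.card_coe_set_eq] at h3
    have hsub : ({QuotientGroup.mk y1, a2, a3, a4} : Set (G ⧸ H)) ⊆
        {x : G ⧸ H | g • x = x} := by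
      intro x hx
      simp only [Set.mem_insert_iff, Set.mem_singleton_iff] at hx
      rcases hx with rfl | rfl | rfl | rfl
      · exact hf1
      · exact hf2
      · exact hf3
      · exact hf4
    have h4c : ({QuotientGroup.mk y1, a2, a3, a4} : Set (G ⧸ H)).ncard = 4 := by
      rw [Set.ncard_insert_of_notMem (by simp [h12, h13, h14]) (Set.toFinite _),
        Set.ncard_insert_of_notMem (by simp [h23, h24]) (Set.toFinite _),
        Set.ncard_pair h34]
    have hle := Set.ncard_le_ncard hsub (Set.toFinite _)
    omega
  · -- existence of an element fixing three points
    obtain ⟨k0, hk0⟩ := Subgroup.ne_bot_iff_exists_ne_one.mp hHne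
    have hk0H : (k0 : G) ∈ H := k0.2
    have hk01 : (k0 : G) ≠ 1 := fun h0 => hk0 (by exact_mod_cast h0)
    have h3 := hfixcount (k0 : G) 1 hk01 (by simpa using hk0H)
    rw [Nat.card_coe_set_eq] at h3
    obtain ⟨x, y, z, hxy, hxz, hyz, hset⟩ := Set.ncard_eq_three.mp h3
    have hxm : x ∈ {p : G ⧸ H | (k0 : G) • p = p} := by rw [hset]; simp
    have hym : y ∈ {p : G ⧸ H | (k0 : G) • p = p} := by rw [hset]; simp
    have hzm : z ∈ {p : G ⧸ H | (k0 : G) • p = p} := by rw [hset]; simp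
    exact ⟨(k0 : G), hk01, x, y, z, hxy, hxz, hyz, hxm, hym, hzm⟩
  · -- exact count of fixed points
    intro g hg1 hex
    obtain ⟨x, hx⟩ := hex
    obtain ⟨y, rfl⟩ := QuotientGroup.mk_surjective x
    exact hfixcount g y hg1 ((hfixmk g y).mp hx)
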